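/- Let f ∈ W^{1,1}(B_r) where B_r ⊂ ℝ^n is a ball, and let k < l be real numbers. Then (l − k) · |{x ∈ B_r : f(x) > l}| ≤ C r^{n+1} / |{x ∈ B_r : f(x) < k}| · ∫_{{k < f < l}} |∇f| dx, where C depends only on n. -/

import Mathlib

open MeasureTheory Real Set

noncomputable section

abbrev Rn (n : ℕ) := EuclideanSpace ℝ (Fin n)

section Helpers

/-- approach a point from the left keeping a strict inequality -/
lemma DG.approach_left {g : ℝ → ℝ} {b v : ℝ} (hc : ContinuousAt g b) (hv : v < g b)
    (hb : 0 < b) : ∃ t, 0 ≤ t ∧ t < b ∧ v < g t := by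
  obtain ⟨ε, hε0, hε⟩ := Metric.mem_nhds_iff.1 (hc.preimage_mem_nhds (Ioi_mem_nhds hv))
  refine ⟨max 0 (b - ε/2), le_max_left _ _, max_lt hb (by linarith), ?_⟩
  have : max 0 (b - ε/2) ∈ Metric.ball b ε := by
    rw [Metric.mem_ball, Real.dist_eq, abs_lt]
    constructor
    · have : b - ε/2 ≤ max 0 (b - ε/2) := le_max_right _ _
      linarith
    · have : max 0 (b - ε/2) < b := max_lt hb (by linarith)
      linarith
  exact hε this

lemma DG.approach_right {g : ℝ → ℝ} {a v c : ℝ} (hc : ContinuousAt g a) (hv : g a < v)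
    (hac : a < c) : ∃ t, a < t ∧ t ≤ c ∧ g t < v := by
  obtain ⟨ε, hε0, hε⟩ := Metric.mem_nhds_iff.1 (hc.preimage_mem_nhds (Iio_mem_nhds hv))
  refine ⟨min c (a + ε/2), lt_min hac (by linarith), min_le_left _ _, ?_⟩
  have : min c (a + ε/2) ∈ Metric.ball a ε := by
    rw [Metric.mem_ball, Real.dist_eq, abs_lt]
    constructor
    · have : a < min c (a + ε/2) := lt_min hac (by linarith)
      linarith
    · have : min c (a + ε/2) ≤ a + ε/2 := min_le_right _ _
      linarith
  exact hε this

/-- The 1-dimensional core of De Giorgi's lemma: a differentiable function crossing from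
below `k` to above `l` must pick up total variation at least `l - k` in the region where
its values lie in `(k, l)`. -/
lemma DG.key1d {g : ℝ → ℝ} (hg : ∀ t ∈ Icc (0:ℝ) 1, DifferentiableAt ℝ g t)
    {k l : ℝ} (hkl : k < l) (h0 : g 0 < k) (h1 : l < g 1) :
    ENNReal.ofReal (l - k)
      ≤ ∫⁻ t in Ioo (0:ℝ) 1 ∩ g ⁻¹' Ioo k l, (‖deriv g t‖₊ : ENNReal) := by
  have hcont : ContinuousOn g (Icc 0 1) :=
    fun t ht => (hg t ht).continuousAt.continuousWithinAt
  -- b : first time g reaches l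
  set T : Set ℝ := Icc 0 1 ∩ g ⁻¹' Ici l with hT
  have hTclosed : IsClosed T := hcont.preimage_isClosed_of_isClosed isClosed_Icc isClosed_Ici
  have hTne : T.Nonempty := ⟨1, ⟨zero_le_one, le_rfl⟩, h1.le⟩
  have hTbdd : BddBelow T := ⟨0, fun t ht => ht.1.1⟩
  set b : ℝ := sInf T with hbdef
  have hbT : b ∈ T := hTclosed.csInf_mem hTne hTbdd
  have hb01 : b ∈ Icc (0:ℝ) 1 := hbT.1
  have hgbl : l ≤ g b := hbT.2
  have hb0 : 0 < b := by
    rcases hb01.1.lt_or_eq with h | h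
    · exact h
    · exfalso; rw [← h] at hgbl; linarith
  have hlt : ∀ t, 0 ≤ t → t < b → g t < l := by
    intro t ht0 htb
    by_contra hcon
    exact absurd (csInf_le hTbdd ⟨⟨ht0, htb.le.trans hb01.2⟩, le_of_not_gt hcon⟩)
      (not_le.2 htb)
  have hgb : g b = l := by
    refine le_antisymm ?_ hgbl
    by_contra hcon
    push_neg at hcon
    obtain ⟨t, ht0, htb, hlg⟩ := DG.approach_left (hg b hb01).continuousAt hcon hb0
    exact absurd (hlt t ht0 htb) (not_lt.2 hlg.le)
  -- a : last time before b that g is ≤ k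
  set S : Set ℝ := Icc 0 b ∩ g ⁻¹' Iic k with hS
  have hScl : IsClosed S :=
    (hcont.mono (Icc_subset_Icc le_rfl hb01.2)).preimage_isClosed_of_isClosed
      isClosed_Icc isClosed_Iic
  have hSne : S.Nonempty := ⟨0, ⟨le_rfl, hb0.le⟩, h0.le⟩
  have hSbdd : BddAbove S := ⟨b, fun t ht => ht.1.2⟩
  set a : ℝ := sSup S with hadef
  have haS : a ∈ S := hScl.csSup_mem hSne hSbdd
  have ha0 : 0 ≤ a := haS.1.1
  have haleb : a ≤ b := haS.1.2
  have hgak : g a ≤ k := haS.2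
  have hab : a < b := by
    rcases haleb.lt_or_eq with h | h
    · exact h
    · exfalso; rw [h, hgb] at hgak; linarith
  have ha01 : a ∈ Icc (0:ℝ) 1 := ⟨ha0, haleb.trans hb01.2⟩
  have hgt : ∀ t, a < t → t ≤ b → k < g t := by
    intro t hat htb
    by_contra hcon
    exact absurd (le_csSup hSbdd ⟨⟨ha0.trans hat.le, htb⟩, le_of_not_gt hcon⟩)
      (not_le.2 hat)
  have hga : g a = k := by
    refine le_antisymm hgak ?_
    by_contra hcon
    push_neg at hcon
    obtain ⟨t, hat, htb, hgl⟩ := DG.approach_right (hg a ha01).continuousAt hcon hab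
    exact absurd (hgt t hat htb) (not_lt.2 hgl.le)
  -- Ioo a b is inside the region of integration
  have hsub : Ioo a b ⊆ Ioo (0:ℝ) 1 ∩ g ⁻¹' Ioo k l := by
    rintro t ⟨hat, htb⟩
    exact ⟨⟨ha0.trans_lt hat, htb.trans_le hb01.2⟩,
      hgt t hat htb.le, hlt t (ha0.trans hat.le) htb⟩
  by_cases htop : (∫⁻ t in Ioo (0:ℝ) 1 ∩ g ⁻¹' Ioo k l, (‖deriv g t‖₊ : ENNReal)) = ⊤
  · rw [htop]; exact le_top
  have hmono : (∫⁻ t in Ioo a b, (‖deriv g t‖₊ : ENNReal))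
      ≤ ∫⁻ t in Ioo (0:ℝ) 1 ∩ g ⁻¹' Ioo k l, (‖deriv g t‖₊ : ENNReal) :=
    lintegral_mono' (Measure.restrict_mono hsub le_rfl) le_rfl
  have hfin : (∫⁻ t in Ioo a b, (‖deriv g t‖₊ : ENNReal)) < ⊤ :=
    hmono.trans_lt (lt_top_iff_ne_top.2 htop)
  have hInt : IntegrableOn (deriv g) (Ioo a b) :=
    ⟨(measurable_deriv g).aestronglyMeasurable, hfin⟩
  have hIoc : IntegrableOn (deriv g) (Ioc a b) := by
    rwa [IntegrableOn, Measure.restrict_congr_set Ioo_ae_eq_Ioc] at hInt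
  have hII : IntervalIntegrable (deriv g) volume a b :=
    (intervalIntegrable_iff_integrableOn_Ioc_of_le hab.le).2 hIoc
  have hftc : ∫ t in a..b, deriv g t = g b - g a := by
    refine intervalIntegral.integral_eq_sub_of_hasDerivAt (fun t ht => ?_) hII
    rw [uIcc_of_le hab.le] at ht
    exact (hg t ⟨ha0.trans ht.1, ht.2.trans hb01.2⟩).hasDerivAt
  have hle : l - k ≤ ∫ t in Ioc a b, ‖deriv g t‖ := by
    have h1' : l - k = ∫ t in a..b, deriv g t := by rw [hftc, hgb, hga]
    have h2' : (∫ t in a..b, deriv g t) ≤ ∫ t in Ioc a b, ‖deriv g t‖ := by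
      rw [intervalIntegral.integral_of_le hab.le]
      calc (∫ t in Ioc a b, deriv g t) ≤ ‖∫ t in Ioc a b, deriv g t‖ := le_abs_self _
        _ ≤ ∫ t in Ioc a b, ‖deriv g t‖ := norm_integral_le_integral_norm _
    linarith
  calc ENNReal.ofReal (l - k) ≤ ENNReal.ofReal (∫ t in Ioc a b, ‖deriv g t‖) :=
        ENNReal.ofReal_le_ofReal hle
    _ = ∫⁻ t in Ioc a b, (‖deriv g t‖₊ : ENNReal) :=
        ofReal_integral_norm_eq_lintegral_enorm hIoc
    _ = ∫⁻ t in Ioo a b, (‖deriv g t‖₊ : ENNReal) := by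
        rw [Measure.restrict_congr_set Ioo_ae_eq_Ioc]
    _ ≤ _ := hmono

/-- change of variables for a positive-scaling affine map -/
lemma DG.lint_affine {n : ℕ} (H : Rn n → ENNReal) (hH : Measurable H) {c : ℝ} (hc : 0 < c)
    (v : Rn n) :
    ∫⁻ y, H (c • y + v) = ENNReal.ofReal ((c ^ n)⁻¹) * ∫⁻ z, H z := by
  have hmeas : Measurable fun z : Rn n => H (z + v) := hH.comp (measurable_add_const v)
  have h1 : ∫⁻ y, H (c • y + v) = ∫⁻ a, H (a + v) ∂(Measure.map (c • ·) volume) :=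
    (lintegral_map hmeas (measurable_const_smul c)).symm
  rw [h1, Measure.map_addHaar_smul volume hc.ne', lintegral_smul_measure,
    lintegral_add_right_eq_self (fun z => H z) v, finrank_euclideanSpace_fin,
    abs_of_nonneg (by positivity), smul_eq_mul]

/-- the estimate along one segment joining `{f < k}` to `{l < f}` -/
lemma DG.seg {n : ℕ} {f : Rn n → ℝ} {x0 : Rn n} {r k l : ℝ} (hr : 0 < r)
    (hd : DifferentiableOn ℝ f (Metric.ball x0 r)) (hkl : k < l)
    {x y : Rn n} (hx : x ∈ Metric.ball x0 r) (hy : y ∈ Metric.ball x0 r)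
    (hfy : f y < k) (hfx : l < f x) :
    ENNReal.ofReal (l - k) ≤ ENNReal.ofReal (2*r) *
      ∫⁻ t in Ioo (0:ℝ) 1,
        (Metric.ball x0 r ∩ f ⁻¹' Ioo k l).indicator
          (fun z => (‖fderiv ℝ f z‖₊ : ENNReal)) ((1 - t) • y + t • x) := by
  set S := Metric.ball x0 r ∩ f ⁻¹' Ioo k l with hS
  set H : Rn n → ENNReal := S.indicator (fun z => (‖fderiv ℝ f z‖₊ : ENNReal)) with hH
  set E : ℝ → Rn n := fun t => (1 - t) • y + t • x with hE
  have hmem : ∀ t ∈ Icc (0:ℝ) 1, E t ∈ Metric.ball x0 r := by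
    intro t ht
    exact (convex_ball x0 r) hy hx (by linarith [ht.2]) ht.1 (by ring)
  have hder : ∀ t ∈ Icc (0:ℝ) 1,
      HasDerivAt (fun s => f (E s)) ((fderiv ℝ f (E t)) (x - y)) t := by
    intro t ht
    have hγ : HasDerivAt E (x - y) t := by
      have h1 : HasDerivAt (fun s : ℝ => (1 - s) • y) (-y) t := by
        simpa using ((hasDerivAt_id t).const_sub 1).smul_const y
      have h2 : HasDerivAt (fun s : ℝ => s • x) x t := by
        simpa using (hasDerivAt_id t).smul_const x
      have := h1.add h2
      rwa [neg_add_eq_sub] at this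
    have hfd : DifferentiableAt ℝ f (E t) :=
      hd.differentiableAt (Metric.isOpen_ball.mem_nhds (hmem t ht))
    exact hfd.hasFDerivAt.comp_hasDerivAt t hγ
  set g : ℝ → ℝ := fun s => f (E s) with hg
  have hgdiff : ∀ t ∈ Icc (0:ℝ) 1, DifferentiableAt ℝ g t :=
    fun t ht => (hder t ht).differentiableAt
  have hE0 : E 0 = y := by simp [hE]
  have hE1 : E 1 = x := by simp [hE]
  have hkey := DG.key1d hgdiff hkl (by simpa [hg, hE0]) (by simpa [hg, hE1])
  set U := Ioo (0:ℝ) 1 ∩ g ⁻¹' Ioo k l with hU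
  have hUopen : IsOpen U := by
    have hgc : ContinuousOn g (Ioo 0 1) := fun t ht =>
      ((hgdiff t (Ioo_subset_Icc_self ht)).continuousAt).continuousWithinAt
    exact hgc.isOpen_inter_preimage isOpen_Ioo isOpen_Ioo
  have hpt : ∀ t, U.indicator (fun t => (‖deriv g t‖₊ : ENNReal)) t
      ≤ (Ioo (0:ℝ) 1).indicator (fun t => ENNReal.ofReal (2*r) * H (E t)) t := by
    intro t
    by_cases htU : t ∈ U
    · rw [indicator_of_mem htU, indicator_of_mem htU.1]
      have ht01 : t ∈ Icc (0:ℝ) 1 := Ioo_subset_Icc_self htU.1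
      have hES : E t ∈ S := ⟨hmem t ht01, htU.2⟩
      have hderiv : deriv g t = (fderiv ℝ f (E t)) (x - y) := (hder t ht01).deriv
      have hxy : ‖x - y‖ ≤ 2 * r := by
        have h1 : dist x y ≤ dist x x0 + dist x0 y := dist_triangle x x0 y
        have h2 : dist x x0 < r := Metric.mem_ball.1 hx
        have h3 : dist x0 y < r := by
          rw [dist_comm]; exact Metric.mem_ball.1 hy
        rw [← dist_eq_norm]; linarith
      have hnorm : ‖deriv g t‖ ≤ (2*r) * ‖fderiv ℝ f (E t)‖ := by
        rw [hderiv]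
        calc ‖(fderiv ℝ f (E t)) (x - y)‖ ≤ ‖fderiv ℝ f (E t)‖ * ‖x - y‖ :=
              (fderiv ℝ f (E t)).le_opNorm (x - y)
          _ ≤ ‖fderiv ℝ f (E t)‖ * (2*r) :=
              mul_le_mul_of_nonneg_left hxy (norm_nonneg _)
          _ = (2*r) * ‖fderiv ℝ f (E t)‖ := mul_comm _ _
      rw [hH, indicator_of_mem hES]
      calc (‖deriv g t‖₊ : ENNReal) = ENNReal.ofReal ‖deriv g t‖ :=
            (ofReal_norm_eq_enorm _).symm
        _ ≤ ENNReal.ofReal ((2*r) * ‖fderiv ℝ f (E t)‖) := ENNReal.ofReal_le_ofReal hnorm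
        _ = ENNReal.ofReal (2*r) * ENNReal.ofReal ‖fderiv ℝ f (E t)‖ :=
            ENNReal.ofReal_mul (by linarith)
        _ = ENNReal.ofReal (2*r) * (‖fderiv ℝ f (E t)‖₊ : ENNReal) := by
            rw [ofReal_norm_eq_enorm]; rfl
    · rw [indicator_of_notMem htU]
      exact zero_le
  calc ENNReal.ofReal (l - k) ≤ ∫⁻ t in U, (‖deriv g t‖₊ : ENNReal) := hkey
    _ = ∫⁻ t, U.indicator (fun t => (‖deriv g t‖₊ : ENNReal)) t :=
        (lintegral_indicator hUopen.measurableSet _).symm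
    _ ≤ ∫⁻ t, (Ioo (0:ℝ) 1).indicator (fun t => ENNReal.ofReal (2*r) * H (E t)) t :=
        lintegral_mono hpt
    _ = ∫⁻ t in Ioo (0:ℝ) 1, ENNReal.ofReal (2*r) * H (E t) :=
        lintegral_indicator measurableSet_Ioo _
    _ = ENNReal.ofReal (2*r) * ∫⁻ t in Ioo (0:ℝ) 1, H (E t) :=
        lintegral_const_mul' _ _ ENNReal.ofReal_ne_top

lemma DG.pow_inv_le {c : ℝ} (hc : (2:ℝ)⁻¹ ≤ c) (n : ℕ) : (c ^ n)⁻¹ ≤ 2 ^ n := by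
  have hc0 : (0:ℝ) < c := by linarith
  have h2 : c⁻¹ ≤ 2 := by
    rw [inv_le_comm₀ hc0 (by norm_num)]; linarith
  have h0 : (0:ℝ) ≤ c⁻¹ := by positivity
  rw [← inv_pow]
  exact pow_le_pow_left₀ h0 h2 n

end Helpers

/-- De Giorgi's isoperimetric lemma. -/
theorem de_giorgi_isoperimetric (n : ℕ) :
    ∃ C > (0 : ℝ), ∀ (r k l : ℝ) (x0 : Rn n) (f : Rn n → ℝ),
      0 < r → k < l →
      DifferentiableOn ℝ f (Metric.ball x0 r) →
      IntegrableOn (fun x => ‖fderiv ℝ f x‖) (Metric.ball x0 r) →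
      0 < (volume {x ∈ Metric.ball x0 r | f x < k}).toReal →
      (l - k) * (volume {x ∈ Metric.ball x0 r | l < f x}).toReal
        ≤ C * r ^ (n + 1) / (volume {x ∈ Metric.ball x0 r | f x < k}).toReal
          * ∫ x in {x ∈ Metric.ball x0 r | k < f x ∧ f x < l}, ‖fderiv ℝ f x‖ := by
  have hω0 : (0:ENNReal) < volume (Metric.ball (0 : Rn n) 1) :=
    Metric.measure_ball_pos _ _ one_pos
  have hωtop : volume (Metric.ball (0 : Rn n) 1) ≠ ⊤ := measure_ball_lt_top.ne
  set w : ℝ := (volume (Metric.ball (0 : Rn n) 1)).toReal with hwdef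
  have hw0 : 0 < w := ENNReal.toReal_pos hω0.ne' hωtop
  refine ⟨2^(n+2) * w, mul_pos (by positivity) hw0, ?_⟩
  intro r k l x0 f hr hkl hd hint hvk
  set B := Metric.ball x0 r with hB
  have hcf : ContinuousOn f B := hd.continuousOn
  -- the three sets and their measurability
  set A := {x ∈ B | l < f x} with hA
  set Bk := {x ∈ B | f x < k} with hBk
  set S := B ∩ f ⁻¹' Ioo k l with hSdef
  have hAeq : A = B ∩ f ⁻¹' Ioi l := by ext z; simp [hA, mem_sep_iff, and_comm]
  have hBkeq : Bk = B ∩ f ⁻¹' Iio k := by ext z; simp [hBk, mem_sep_iff, and_comm]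
  have hSeq : {x ∈ B | k < f x ∧ f x < l} = S := by
    ext z
    simp only [hSdef, mem_sep_iff, mem_inter_iff, mem_preimage, mem_Ioo]
  have hAmeas : MeasurableSet A := by
    rw [hAeq]
    exact (hcf.isOpen_inter_preimage Metric.isOpen_ball isOpen_Ioi).measurableSet
  have hBkmeas : MeasurableSet Bk := by
    rw [hBkeq]
    exact (hcf.isOpen_inter_preimage Metric.isOpen_ball isOpen_Iio).measurableSet
  have hSmeas : MeasurableSet S :=
    (hcf.isOpen_inter_preimage Metric.isOpen_ball isOpen_Ioo).measurableSet
  set H : Rn n → ENNReal := S.indicator (fun z => (‖fderiv ℝ f z‖₊ : ENNReal)) with hHdef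
  have hHmeas : Measurable H :=
    Measurable.indicator ((measurable_fderiv ℝ f).nnnorm.coe_nnreal_ennreal) hSmeas
  set IH : ENNReal := ∫⁻ z, H z with hIHdef
  have hIHeq : IH = ∫⁻ z in S, (‖fderiv ℝ f z‖₊ : ENNReal) := lintegral_indicator hSmeas _
  have hIHtop : IH ≠ ⊤ := by
    have h1 : IH ≤ ∫⁻ z in B, (‖fderiv ℝ f z‖₊ : ENNReal) := by
      rw [hIHeq]
      exact lintegral_mono' (Measure.restrict_mono inter_subset_left le_rfl) le_rfl
    have h2 : (∫⁻ z in B, (‖fderiv ℝ f z‖₊ : ENNReal)) < ⊤ := by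
      simpa [HasFiniteIntegral, nnnorm_norm, enorm_eq_nnnorm] using hint.2
    exact (h1.trans_lt h2).ne
  -- the two half intervals
  set I1 : Set ℝ := Ioc (0:ℝ) 2⁻¹ with hI1
  set I2 : Set ℝ := Ioo (2⁻¹:ℝ) 1 with hI2
  set M : ENNReal := ENNReal.ofReal (2^n) * IH with hMdef
  -- claim 1 : for every x, the (y, small t) part is bounded by M
  have claim1 : ∀ x : Rn n, (∫⁻ y in Bk, ∫⁻ t in I1, H ((1 - t) • y + t • x)) ≤ M := by
    intro x
    have hswap : (∫⁻ y in Bk, ∫⁻ t in I1, H ((1 - t) • y + t • x))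
        = ∫⁻ t in I1, ∫⁻ y in Bk, H ((1 - t) • y + t • x) := by
      refine lintegral_lintegral_swap ?_
      exact (hHmeas.comp (by fun_prop :
        Measurable (fun p : Rn n × ℝ => (1 - p.2) • p.1 + p.2 • x))).aemeasurable
    rw [hswap]
    have hbound : ∀ t ∈ I1, (∫⁻ y in Bk, H ((1 - t) • y + t • x)) ≤ M := by
      intro t ht
      have hc : (0:ℝ) < 1 - t := by
        have := ht.2; norm_num at this ⊢; linarith
      calc (∫⁻ y in Bk, H ((1 - t) • y + t • x))
          ≤ ∫⁻ y, H ((1 - t) • y + t • x) := setLIntegral_le_lintegral _ _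
        _ = ENNReal.ofReal (((1 - t) ^ n)⁻¹) * IH := DG.lint_affine H hHmeas hc _
        _ ≤ M := by
            rw [hMdef]
            refine mul_le_mul_left (ENNReal.ofReal_le_ofReal ?_) IH
            refine DG.pow_inv_le ?_ n
            have := ht.2; linarith
    calc (∫⁻ t in I1, ∫⁻ y in Bk, H ((1 - t) • y + t • x))
        ≤ ∫⁻ _ in I1, M := setLIntegral_mono' measurableSet_Ioc hbound
      _ ≤ M := by
          rw [setLIntegral_const]
          calc M * volume I1 ≤ M * 1 := by
                refine mul_le_mul_right ?_ M
                rw [hI1, Real.volume_Ioc]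
                exact ENNReal.ofReal_le_one.2 (by norm_num)
            _ = M := mul_one M
  -- claim 2 : for every y, the (x, large t) part is bounded by M
  have claim2 : ∀ y : Rn n, (∫⁻ x in A, ∫⁻ t in I2, H ((1 - t) • y + t • x)) ≤ M := by
    intro y
    have hswap : (∫⁻ x in A, ∫⁻ t in I2, H ((1 - t) • y + t • x))
        = ∫⁻ t in I2, ∫⁻ x in A, H ((1 - t) • y + t • x) := by
      refine lintegral_lintegral_swap ?_
      exact (hHmeas.comp (by fun_prop :
        Measurable (fun p : Rn n × ℝ => (1 - p.2) • y + p.2 • p.1))).aemeasurable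
    rw [hswap]
    have hbound : ∀ t ∈ I2, (∫⁻ x in A, H ((1 - t) • y + t • x)) ≤ M := by
      intro t ht
      have hc : (0:ℝ) < t := lt_trans (by norm_num) ht.1
      calc (∫⁻ x in A, H ((1 - t) • y + t • x))
          ≤ ∫⁻ x, H ((1 - t) • y + t • x) := setLIntegral_le_lintegral _ _
        _ = ∫⁻ x, H (t • x + (1 - t) • y) := lintegral_congr (fun x => by rw [add_comm])
        _ = ENNReal.ofReal ((t ^ n)⁻¹) * IH := DG.lint_affine H hHmeas hc _
        _ ≤ M := by
            rw [hMdef]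
            refine mul_le_mul_left (ENNReal.ofReal_le_ofReal ?_) IH
            exact DG.pow_inv_le ht.1.le n
    calc (∫⁻ t in I2, ∫⁻ x in A, H ((1 - t) • y + t • x))
        ≤ ∫⁻ _ in I2, M := setLIntegral_mono' measurableSet_Ioo hbound
      _ ≤ M := by
          rw [setLIntegral_const]
          calc M * volume I2 ≤ M * 1 := by
                refine mul_le_mul_right ?_ M
                rw [hI2, Real.volume_Ioo]
                exact ENNReal.ofReal_le_one.2 (by norm_num)
            _ = M := mul_one M
  -- the splitting of the double integral
  have hsplit : ∀ x y : Rn n, (∫⁻ t in Ioo (0:ℝ) 1, H ((1 - t) • y + t • x))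
      = (∫⁻ t in I1, H ((1 - t) • y + t • x)) + ∫⁻ t in I2, H ((1 - t) • y + t • x) := by
    intro x y
    have hdisj : Disjoint I1 I2 := by
      rw [Set.disjoint_left]; rintro t ⟨_, h⟩ ⟨h', _⟩; linarith
    have hun : I1 ∪ I2 = Ioo (0:ℝ) 1 := Ioc_union_Ioo_eq_Ioo (by norm_num) (by norm_num)
    rw [← hun, lintegral_union measurableSet_Ioo hdisj]
  -- the measurability facts needed for additivity of nested integrals
  have hK1m : Measurable (fun q : Rn n × Rn n => ∫⁻ t in I1, H ((1 - t) • q.2 + t • q.1)) := by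
    have hm : Measurable (fun p : (Rn n × Rn n) × ℝ => H ((1 - p.2) • p.1.2 + p.2 • p.1.1)) :=
      hHmeas.comp (by fun_prop)
    exact Measurable.lintegral_prod_right' hm
  have hK2m : Measurable (fun q : Rn n × Rn n => ∫⁻ t in I2, H ((1 - t) • q.2 + t • q.1)) := by
    have hm : Measurable (fun p : (Rn n × Rn n) × ℝ => H ((1 - p.2) • p.1.2 + p.2 • p.1.1)) :=
      hHmeas.comp (by fun_prop)
    exact Measurable.lintegral_prod_right' hm
  -- the central estimate, still in ℝ≥0∞
  have hJ : (∫⁻ x in A, ∫⁻ y in Bk, ∫⁻ t in Ioo (0:ℝ) 1, H ((1 - t) • y + t • x))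
      ≤ M * volume A + M * volume Bk := by
    have hinner : ∀ x : Rn n, (∫⁻ y in Bk, ∫⁻ t in Ioo (0:ℝ) 1, H ((1 - t) • y + t • x))
        = (∫⁻ y in Bk, ∫⁻ t in I1, H ((1 - t) • y + t • x))
          + ∫⁻ y in Bk, ∫⁻ t in I2, H ((1 - t) • y + t • x) := by
      intro x
      simp only [hsplit x]
      refine lintegral_add_left ?_ _
      exact Measurable.lintegral_prod_right (hHmeas.comp (by fun_prop :
        Measurable (fun p : Rn n × ℝ => (1 - p.2) • p.1 + p.2 • x)))
    calc (∫⁻ x in A, ∫⁻ y in Bk, ∫⁻ t in Ioo (0:ℝ) 1, H ((1 - t) • y + t • x))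
        = (∫⁻ x in A, ∫⁻ y in Bk, ∫⁻ t in I1, H ((1 - t) • y + t • x))
          + ∫⁻ x in A, ∫⁻ y in Bk, ∫⁻ t in I2, H ((1 - t) • y + t • x) := by
          simp only [hinner]
          refine lintegral_add_left ?_ _
          exact Measurable.lintegral_prod_right' hK1m
      _ ≤ M * volume A + M * volume Bk := by
          refine add_le_add ?_ ?_
          · calc (∫⁻ x in A, ∫⁻ y in Bk, ∫⁻ t in I1, H ((1 - t) • y + t • x))
                ≤ ∫⁻ _ in A, M := lintegral_mono (fun x => claim1 x)
              _ = M * volume A := setLIntegral_const A M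
          · have hswapxy : (∫⁻ x in A, ∫⁻ y in Bk, ∫⁻ t in I2, H ((1 - t) • y + t • x))
                = ∫⁻ y in Bk, ∫⁻ x in A, ∫⁻ t in I2, H ((1 - t) • y + t • x) := by
              refine lintegral_lintegral_swap ?_
              exact (hK2m : Measurable (fun p : Rn n × Rn n =>
                ∫⁻ t in I2, H ((1 - t) • p.2 + t • p.1))).aemeasurable
            rw [hswapxy]
            calc (∫⁻ y in Bk, ∫⁻ x in A, ∫⁻ t in I2, H ((1 - t) • y + t • x))
                ≤ ∫⁻ _ in Bk, M := lintegral_mono (fun y => claim2 y)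
              _ = M * volume Bk := setLIntegral_const Bk M
  -- integrating the segment inequality
  have hmain : ENNReal.ofReal (l - k) * volume Bk * volume A
      ≤ ENNReal.ofReal (2*r) * (M * volume A + M * volume Bk) := by
    have hstep1 : ∀ x ∈ A, ENNReal.ofReal (l - k) * volume Bk
        ≤ ENNReal.ofReal (2*r) * ∫⁻ y in Bk, ∫⁻ t in Ioo (0:ℝ) 1, H ((1 - t) • y + t • x) := by
      intro x hx
      have hseg : ∀ y ∈ Bk, ENNReal.ofReal (l - k)
          ≤ ENNReal.ofReal (2*r) * ∫⁻ t in Ioo (0:ℝ) 1, H ((1 - t) • y + t • x) :=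
        fun y hy => DG.seg hr hd hkl hx.1 hy.1 hy.2 hx.2
      calc ENNReal.ofReal (l - k) * volume Bk = ∫⁻ _ in Bk, ENNReal.ofReal (l - k) :=
            (setLIntegral_const Bk _).symm
        _ ≤ ∫⁻ y in Bk, ENNReal.ofReal (2*r) * ∫⁻ t in Ioo (0:ℝ) 1, H ((1 - t) • y + t • x) :=
            setLIntegral_mono' hBkmeas hseg
        _ = ENNReal.ofReal (2*r) * ∫⁻ y in Bk, ∫⁻ t in Ioo (0:ℝ) 1, H ((1 - t) • y + t • x) :=
            lintegral_const_mul' _ _ ENNReal.ofReal_ne_top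
    calc ENNReal.ofReal (l - k) * volume Bk * volume A
        = ∫⁻ _ in A, ENNReal.ofReal (l - k) * volume Bk := (setLIntegral_const A _).symm
      _ ≤ ∫⁻ x in A, ENNReal.ofReal (2*r)
            * ∫⁻ y in Bk, ∫⁻ t in Ioo (0:ℝ) 1, H ((1 - t) • y + t • x) :=
          setLIntegral_mono' hAmeas hstep1
      _ = ENNReal.ofReal (2*r)
            * ∫⁻ x in A, ∫⁻ y in Bk, ∫⁻ t in Ioo (0:ℝ) 1, H ((1 - t) • y + t • x) :=
          lintegral_const_mul' _ _ ENNReal.ofReal_ne_top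
      _ ≤ ENNReal.ofReal (2*r) * (M * volume A + M * volume Bk) := mul_le_mul_right hJ _
  -- volumes of the sets
  have hvolB : volume B = ENNReal.ofReal (r ^ n) * volume (Metric.ball (0 : Rn n) 1) := by
    rw [hB, Measure.addHaar_ball_of_pos volume x0 hr, finrank_euclideanSpace_fin]
  have hvolBtop : volume B ≠ ⊤ := measure_ball_lt_top.ne
  have hAB : volume A ≤ volume B := measure_mono (sep_subset _ _)
  have hBkB : volume Bk ≤ volume B := measure_mono (sep_subset _ _)
  have hAtop : volume A ≠ ⊤ := (hAB.trans_lt hvolBtop.lt_top).ne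
  have hBktop : volume Bk ≠ ⊤ := (hBkB.trans_lt hvolBtop.lt_top).ne
  -- strengthen the right-hand side using |A|, |Bk| ≤ |B|
  have hmain2 : ENNReal.ofReal (l - k) * volume Bk * volume A
      ≤ ENNReal.ofReal (2*r) * (2 * (M * (ENNReal.ofReal (r ^ n)
          * volume (Metric.ball (0 : Rn n) 1)))) := by
    refine hmain.trans ?_
    have h1 : M * volume A + M * volume Bk ≤ M * volume B + M * volume B :=
      add_le_add (mul_le_mul_right hAB M) (mul_le_mul_right hBkB M)
    refine (mul_le_mul_right h1 _).trans ?_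
    rw [hvolB]
    apply le_of_eq
    ring
  -- convert to real numbers
  set i : ℝ := ∫ x in S, ‖fderiv ℝ f x‖ with hidef
  have hIS : IntegrableOn (fun z => ‖fderiv ℝ f z‖) S := hint.mono_set inter_subset_left
  have hiIH : ENNReal.ofReal i = IH := by
    rw [hidef, hIHeq]
    simpa [nnnorm_norm, norm_norm, enorm_eq_nnnorm] using ofReal_integral_norm_eq_lintegral_enorm hIS
  have hi0 : 0 ≤ i := integral_nonneg (fun z => norm_nonneg _)
  have hiIH' : IH.toReal = i := by rw [← hiIH, ENNReal.toReal_ofReal hi0]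
  -- take toReal of both sides of hmain2
  have hRtop : ENNReal.ofReal (2*r) * (2 * (M * (ENNReal.ofReal (r ^ n)
      * volume (Metric.ball (0 : Rn n) 1)))) ≠ ⊤ := by
    rw [hMdef]
    refine ENNReal.mul_ne_top ENNReal.ofReal_ne_top ?_
    refine ENNReal.mul_ne_top (by norm_num) ?_
    refine ENNReal.mul_ne_top (ENNReal.mul_ne_top ENNReal.ofReal_ne_top hIHtop) ?_
    exact ENNReal.mul_ne_top ENNReal.ofReal_ne_top hωtop
  have hreal := ENNReal.toReal_mono hRtop hmain2
  simp only [hMdef, ENNReal.toReal_mul,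
    ENNReal.toReal_ofReal (by linarith : (0:ℝ) ≤ 2*r),
    ENNReal.toReal_ofReal (by linarith : (0:ℝ) ≤ l - k),
    ENNReal.toReal_ofReal (by positivity : (0:ℝ) ≤ (2:ℝ)^n),
    ENNReal.toReal_ofReal (by positivity : (0:ℝ) ≤ r^n),
    ENNReal.toReal_ofNat, hiIH', ← hwdef] at hreal
  -- finish
  rw [hSeq]
  rw [div_mul_eq_mul_div, le_div_iff₀ hvk]
  calc (l - k) * (volume A).toReal * (volume Bk).toReal
      = (l - k) * (volume Bk).toReal * (volume A).toReal := by ring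
    _ ≤ 2 * r * (2 * (2 ^ n * i * (r ^ n * w))) := hreal
    _ = 2 ^ (n + 2) * w * r ^ (n + 1) * i := by ring
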